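/- Let G be a group with automatic structures L₁ ⊆ A* for π₁ : A* → G and L₂ ⊆ B* for π₂ : B* → G, and let φ be an endomorphism of G such that L₁ induces an automatic structure L₁^(φ) through φ and the BRP holds for (φ, L₁, L₂). Then the subgroup {(x, 1) : x ∈ Ker(φ)} of G × Gφ, which is isomorphic to Ker(φ), is (L₁ ⋄ L₁^(φ))-quasiconvex, where L₁ ⋄ L₁^(φ) is the convolution automatic structure on G × Gφ. In particular, Ker(φ) is an automatic group. -/

import Mathlib

open scoped NNReal

namespace Auto

/-- The generating set `Aπ ∪ (Aπ)⁻¹` of `G` determined by `π : A* → G`. -/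
def gens {A G : Type*} [Group G] (π : FreeMonoid A →* G) : Set G :=
  (Set.range fun a : A => π (FreeMonoid.of a)) ∪
    Set.range fun a : A => (π (FreeMonoid.of a))⁻¹

/-- The word metric `d_A` on `G`: the least `n` such that `g⁻¹h` is a product of `n`
elements of `Aπ ∪ (Aπ)⁻¹`. -/
noncomputable def wdist {A G : Type*} [Group G] (π : FreeMonoid A →* G) (g h : G) : ℕ :=
  sInf {n : ℕ | ∃ l : List G, l.length = n ∧ (∀ x ∈ l, x ∈ gens π) ∧ l.prod = g⁻¹ * h}

/-- Evaluation of a word of `A*` in `G`. -/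
def evalW {A G : Type*} [Group G] (π : FreeMonoid A →* G) (w : List A) : G :=
  π (FreeMonoid.ofList w)

/-- `u` and `v` `p`-fellow travel: `d_A(u^[n]π, v^[n]π) ≤ p` for all `n`. -/
def FellowTravel {A G : Type*} [Group G] (π : FreeMonoid A →* G) (p : ℝ≥0)
    (u v : List A) : Prop :=
  ∀ n : ℕ, (wdist π (evalW π (u.take n)) (evalW π (v.take n)) : ℝ≥0) ≤ p

/-- `u` and `v` are `p`-meeting-fellow-travellers. -/
def MFT {A G : Type*} [Group G] (π : FreeMonoid A →* G) (p : ℝ≥0) (u v : List A) : Prop :=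
  FellowTravel π p u v ∧ evalW π u = evalW π v

/-- A language is regular if it is accepted by a finite-state automaton. -/
def IsRegular {A : Type*} (L : Language A) : Prop :=
  ∃ (σ : Type) (_ : Fintype σ) (M : DFA A σ), M.accepts = L

/-- `L` is an automatic structure for `π`. -/
structure IsAutomaticStructure {A G : Type*} [Group G] (π : FreeMonoid A →* G)
    (L : Language A) : Prop where
  regular : IsRegular L
  onto : ∀ g : G, ∃ w ∈ L, evalW π w = g
  ft : ∃ N : ℕ, ∀ u ∈ L, ∀ v ∈ L,
    wdist π (evalW π u) (evalW π v) ≤ 1 → FellowTravel π N u v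

/-- Evaluation of an element of `A ∪ {ε}`. -/
def evalOpt {A G : Type*} [Group G] (π : FreeMonoid A →* G) : Option A → G
  | none => 1
  | some a => π (FreeMonoid.of a)

/-- `L` is a biautomatic structure for `π`. -/
structure IsBiautomaticStructure {A G : Type*} [Group G] (π : FreeMonoid A →* G)
    (L : Language A) extends IsAutomaticStructure π L : Prop where
  bi : ∃ N : ℕ, ∀ u ∈ L, ∀ v ∈ L, ∀ a : Option A,
    evalW π v = evalOpt π a * evalW π u →
    ∀ n : ℕ, wdist π (evalOpt π a * evalW π (u.take n)) (evalW π (v.take n)) ≤ N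

/-- A language is factorial if it is closed under taking factors. -/
def IsFactorial {A : Type*} (L : Language A) : Prop :=
  ∀ u ∈ L, ∀ v : List A, v <:+: u → v ∈ L

/-- `D : ℝ≥0 → ℝ≥0` is a departure function for `(G, L)`. -/
def IsDepartureFunction {A G : Type*} [Group G] (π : FreeMonoid A →* G) (L : Language A)
    (D : ℝ≥0 → ℝ≥0) : Prop :=
  ∀ w ∈ L, ∀ r : ℝ≥0, ∀ s t : ℕ, D r ≤ (t : ℝ≥0) → s + t ≤ w.length →
    r < (wdist π (evalW π (w.take s)) (evalW π (w.take (s + t))) : ℝ≥0)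

/-- Every point of `S` is within distance `N` of `T`. -/
def NbhdIn {A G : Type*} [Group G] (π : FreeMonoid A →* G) (N : ℕ) (S T : Set G) : Prop :=
  ∀ s ∈ S, ∃ t ∈ T, wdist π s t ≤ N

/-- The Hausdorff distance between `S` and `T` is at most `N`. -/
def HausdorffLE {A G : Type*} [Group G] (π : FreeMonoid A →* G) (N : ℕ)
    (S T : Set G) : Prop :=
  NbhdIn π N S T ∧ NbhdIn π N T S

/-- `H` is an `L`-quasiconvex subgroup of `G`. -/
def IsQuasiconvex {A G : Type*} [Group G] (π : FreeMonoid A →* G) (L : Language A)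
    (H : Subgroup G) : Prop :=
  ∃ k : ℕ, ∀ h ∈ H, ∀ h' ∈ H, ∀ w ∈ L, h * evalW π w = h' →
    ∀ n : ℕ, ∃ z ∈ H, wdist π (h * evalW π (w.take n)) z ≤ k

/-- The bounded reduction property for `(φ, L, L')`. -/
def BRP {A B G G' : Type*} [Group G] [Group G'] (π : FreeMonoid A →* G)
    (π' : FreeMonoid B →* G') (φ : G →* G') (L : Language A) (L' : Language B) : Prop :=
  ∃ N : ℕ, ∀ x : G, ∀ α ∈ L, ∀ β ∈ L', evalW π' β = φ (evalW π α) →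
    HausdorffLE π' N (Set.range fun n : ℕ => φ (x * evalW π (α.take n)))
      (Set.range fun n : ℕ => φ x * evalW π' (β.take n))

/-- The synchronous bounded reduction property for `(φ, L, L')`. -/
def SyncBRP {A B G G' : Type*} [Group G] [Group G'] (π : FreeMonoid A →* G)
    (π' : FreeMonoid B →* G') (φ : G →* G') (L : Language A) (L' : Language B) : Prop :=
  ∃ N : ℕ, ∀ x : G, ∀ α ∈ L, ∀ β ∈ L', evalW π' β = φ (evalW π α) →
    ∀ n : ℕ, wdist π' (φ (x * evalW π (α.take n))) (φ x * evalW π' (β.take n)) ≤ N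

/-- The fellow traveller bounded reduction property (FT-BRP) for `(φ, L, L')`. -/
def FTBRP {A B G G' : Type*} [Group G] [Group G'] (π : FreeMonoid A →* G)
    (π' : FreeMonoid B →* G') (φ : G →* G') (L : Language A) (L' : Language B) : Prop :=
  ∀ p : ℝ≥0, ∃ q : ℝ≥0,
    ∀ u₁ ∈ L, ∀ u₂ ∈ L, ∀ u₃ ∈ L, ∀ u₁' ∈ L', ∀ u₂' ∈ L', ∀ u₃' ∈ L',
      evalW π' u₁' = φ (evalW π u₁) → evalW π' u₂' = φ (evalW π u₂) →
        evalW π' u₃' = φ (evalW π u₃) →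
          MFT π p (u₁ ++ u₂) u₃ → MFT π' q (u₁' ++ u₂') u₃'

/-- The natural homomorphism `(A ⊔ B)* → G` agreeing with `π₁` on `A` and `π₂` on `B`. -/
def sumHom {A B G : Type*} [Group G] (π₁ : FreeMonoid A →* G) (π₂ : FreeMonoid B →* G) :
    FreeMonoid (A ⊕ B) →* G :=
  FreeMonoid.lift (Sum.elim (fun a => π₁ (FreeMonoid.of a)) fun b => π₂ (FreeMonoid.of b))

/-- The union `L₁ ∪ L₂` viewed as a language over `A ⊔ B`. -/
def unionLang {A B : Type*} (L₁ : Language A) (L₂ : Language B) : Language (A ⊕ B) :=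
  {w : List (A ⊕ B) | (∃ u ∈ L₁, w = u.map Sum.inl) ∨ ∃ v ∈ L₂, w = v.map Sum.inr}

/-- `L` is an asynchronous automatic structure for `π`. -/
def IsAsyncAutomaticStructure {A G : Type*} [Group G] (π : FreeMonoid A →* G)
    (L : Language A) : Prop :=
  IsRegular L ∧ (∀ g : G, ∃ w ∈ L, evalW π w = g) ∧
    ∃ p : ℕ, ∀ u ∈ L, ∀ v ∈ L, wdist π (evalW π u) (evalW π v) ≤ 1 →
      ∃ φ ψ : ℕ → ℕ, Monotone φ ∧ Monotone ψ ∧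
        Function.Surjective φ ∧ Function.Surjective ψ ∧
          ∀ t : ℕ, wdist π (evalW π (u.take (φ t))) (evalW π (v.take (ψ t))) ≤ p

/-- `L₁` and `L₂` are equivalent automatic structures. -/
def LangEquivalent {A B G : Type*} [Group G] (π₁ : FreeMonoid A →* G)
    (π₂ : FreeMonoid B →* G) (L₁ : Language A) (L₂ : Language B) : Prop :=
  IsAsyncAutomaticStructure (sumHom π₁ π₂) (unionLang L₁ L₂)

/-- `L₁` and `L₂` are synchronously equivalent automatic structures. -/
def LangSyncEquivalent {A B G : Type*} [Group G] (π₁ : FreeMonoid A →* G)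
    (π₂ : FreeMonoid B →* G) (L₁ : Language A) (L₂ : Language B) : Prop :=
  IsAutomaticStructure (sumHom π₁ π₂) (unionLang L₁ L₂)

/-- `L` has the Hausdorff closeness property. -/
def HausClose {A G : Type*} [Group G] (π : FreeMonoid A →* G) (L : Language A) : Prop :=
  ∃ N : ℕ, ∀ u ∈ L, ∀ v ∈ L, wdist π (evalW π u) (evalW π v) ≤ 1 →
    HausdorffLE π N (Set.range fun n : ℕ => evalW π (u.take n))
      (Set.range fun n : ℕ => evalW π (v.take n))

/-- The padded alphabet `C = (A×B) ∪ (A×{$}) ∪ ({$}×B)` of convolution. -/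
abbrev ConvAlphabet (A B : Type*) := (A × B) ⊕ (A ⊕ B)

/-- The convolution `u ⋄ v` of two words. -/
def conv {A B : Type*} : List A → List B → List (ConvAlphabet A B)
  | [], [] => []
  | [], b :: v => Sum.inr (Sum.inr b) :: conv [] v
  | a :: u, [] => Sum.inr (Sum.inl a) :: conv u []
  | a :: u, b :: v => Sum.inl (a, b) :: conv u v
  termination_by u v => u.length + v.length

/-- The convolution `L₁ ⋄ L₂` of two languages. -/
def convLang {A B : Type*} (L₁ : Language A) (L₂ : Language B) :
    Language (ConvAlphabet A B) :=
  {w : List (ConvAlphabet A B) | ∃ u ∈ L₁, ∃ v ∈ L₂, w = conv u v}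

/-- The natural homomorphism `C* → G × G'` for the convolution alphabet. -/
def convHom {A B G G' : Type*} [Group G] [Group G'] (π₁ : FreeMonoid A →* G)
    (π₂ : FreeMonoid B →* G') : FreeMonoid (ConvAlphabet A B) →* G × G' :=
  FreeMonoid.lift fun c =>
    match c with
    | Sum.inl (a, b) => (π₁ (FreeMonoid.of a), π₂ (FreeMonoid.of b))
    | Sum.inr (Sum.inl a) => (π₁ (FreeMonoid.of a), 1)
    | Sum.inr (Sum.inr b) => (1, π₂ (FreeMonoid.of b))

/-- A group is automatic if it admits an automatic structure over some finite alphabet. -/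
def IsAutomaticGroup (G : Type*) [Group G] : Prop :=
  ∃ (A : Type) (_ : Fintype A) (π : FreeMonoid A →* G) (L : Language A),
    IsAutomaticStructure π L

end Auto
namespace Auto

variable {A G : Type*} [Group G]

theorem evalW_nil (π : FreeMonoid A →* G) : evalW π [] = 1 := by
  rw [evalW, show FreeMonoid.ofList ([] : List A) = 1 from rfl, map_one]

theorem evalW_append (π : FreeMonoid A →* G) (x y : List A) :
    evalW π (x ++ y) = evalW π x * evalW π y := by
  unfold evalW; rw [← map_mul]; rfl

theorem evalW_singleton (π : FreeMonoid A →* G) (a : A) :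
    evalW π [a] = π (FreeMonoid.of a) := rfl

theorem evalW_cons (π : FreeMonoid A →* G) (a : A) (w : List A) :
    evalW π (a :: w) = π (FreeMonoid.of a) * evalW π w := by
  rw [show a :: w = [a] ++ w from rfl, evalW_append, evalW_singleton]

theorem mem_gens_of (π : FreeMonoid A →* G) (a : A) : π (FreeMonoid.of a) ∈ gens π :=
  Or.inl ⟨a, rfl⟩

theorem inv_mem_gens {π : FreeMonoid A →* G} {x : G} (hx : x ∈ gens π) : x⁻¹ ∈ gens π := by
  rcases hx with ⟨a, rfl⟩ | ⟨a, rfl⟩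
  · exact Or.inr ⟨a, rfl⟩
  · exact Or.inl ⟨a, by simp⟩

theorem gens_finite [Fintype A] (π : FreeMonoid A →* G) : (gens π).Finite :=
  (Set.finite_range _).union (Set.finite_range _)

theorem wdist_le {π : FreeMonoid A →* G} {g h : G} {l : List G} (hl : ∀ x ∈ l, x ∈ gens π)
    (hprod : l.prod = g⁻¹ * h) : wdist π g h ≤ l.length :=
  Nat.sInf_le ⟨l, rfl, hl, hprod⟩

theorem wdist_self (π : FreeMonoid A →* G) (g : G) : wdist π g g = 0 :=
  Nat.le_zero.mp (wdist_le (l := []) (by simp) (by simp))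

theorem exists_list_eval (π : FreeMonoid A →* G) (w : List A) :
    ∃ l : List G, l.length = w.length ∧ (∀ x ∈ l, x ∈ gens π) ∧ l.prod = evalW π w := by
  induction w with
  | nil => exact ⟨[], rfl, by simp, by simp [evalW_nil]⟩
  | cons a w ih =>
    obtain ⟨l, hlen, hmem, hprod⟩ := ih
    refine ⟨π (FreeMonoid.of a) :: l, by simp [hlen], ?_, by simp [hprod, evalW_cons]⟩
    intro x hx
    rcases List.mem_cons.mp hx with rfl | hx
    · exact mem_gens_of π a
    · exact hmem x hx

theorem wdist_set_nonempty {π : FreeMonoid A →* G} (hπ : Function.Surjective π) (g h : G) :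
    {n : ℕ | ∃ l : List G, l.length = n ∧ (∀ x ∈ l, x ∈ gens π) ∧ l.prod = g⁻¹ * h}.Nonempty := by
  obtain ⟨w, hw⟩ := hπ (g⁻¹ * h)
  obtain ⟨l, hlen, hmem, hprod⟩ := exists_list_eval π (FreeMonoid.toList w)
  refine ⟨l.length, l, rfl, hmem, ?_⟩
  rw [hprod, ← hw, evalW]
  congr 1

theorem exists_list_of_wdist {π : FreeMonoid A →* G} (hπ : Function.Surjective π) (g h : G) :
    ∃ l : List G, l.length = wdist π g h ∧ (∀ x ∈ l, x ∈ gens π) ∧ l.prod = g⁻¹ * h :=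
  Nat.sInf_mem (wdist_set_nonempty hπ g h)

theorem wdist_triangle {π : FreeMonoid A →* G} (hπ : Function.Surjective π) (g k h : G) :
    wdist π g h ≤ wdist π g k + wdist π k h := by
  obtain ⟨l₁, hl₁, hm₁, hp₁⟩ := exists_list_of_wdist hπ g k
  obtain ⟨l₂, hl₂, hm₂, hp₂⟩ := exists_list_of_wdist hπ k h
  have := wdist_le (π := π) (g := g) (h := h) (l := l₁ ++ l₂) ?_ ?_
  · simpa [hl₁, hl₂] using this
  · intro x hx; rcases List.mem_append.mp hx with hx | hx
    · exact hm₁ x hx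
    · exact hm₂ x hx
  · rw [List.prod_append, hp₁, hp₂]; group

theorem wdist_eq_one_left (π : FreeMonoid A →* G) (g h : G) :
    wdist π g h = wdist π 1 (g⁻¹ * h) := by
  unfold wdist; congr 1; ext n; simp

theorem wdist_symm {π : FreeMonoid A →* G} (hπ : Function.Surjective π) (g h : G) :
    wdist π g h = wdist π h g := by
  have key : ∀ g h : G, wdist π g h ≤ wdist π h g := by
    intro g h
    obtain ⟨l, hl, hm, hp⟩ := exists_list_of_wdist hπ h g
    have := wdist_le (π := π) (g := g) (h := h) (l := (l.map (·⁻¹)).reverse) ?_ ?_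
    · simpa [hl] using this
    · intro x hx
      simp only [List.mem_reverse, List.mem_map] at hx
      obtain ⟨y, hy, rfl⟩ := hx
      exact inv_mem_gens (hm y hy)
    · rw [← List.prod_inv_reverse, hp]; group
  exact le_antisymm (key g h) (key h g)

/-! ### Balls -/

def ballSet (S : Set G) (R : ℕ) : Set G :=
  {g | ∃ l : List G, l.length ≤ R ∧ (∀ x ∈ l, x ∈ S) ∧ l.prod = g}

theorem one_mem_ballSet {S : Set G} {R : ℕ} : (1 : G) ∈ ballSet S R :=
  ⟨[], by simp, by simp, by simp⟩

theorem ballSet_mono {S : Set G} {R R' : ℕ} (h : R ≤ R') : ballSet S R ⊆ ballSet S R' := by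
  rintro g ⟨l, hl, hm, hp⟩
  exact ⟨l, hl.trans h, hm, hp⟩

theorem mul_mem_ballSet {S : Set G} {R R' : ℕ} {a b : G} (ha : a ∈ ballSet S R)
    (hb : b ∈ ballSet S R') : a * b ∈ ballSet S (R + R') := by
  obtain ⟨l₁, hl₁, hm₁, hp₁⟩ := ha
  obtain ⟨l₂, hl₂, hm₂, hp₂⟩ := hb
  refine ⟨l₁ ++ l₂, by simpa using Nat.add_le_add hl₁ hl₂, ?_, by rw [List.prod_append, hp₁, hp₂]⟩
  intro x hx; rcases List.mem_append.mp hx with hx | hx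
  · exact hm₁ x hx
  · exact hm₂ x hx

theorem inv_mem_ballSet {S : Set G} (hS : ∀ x ∈ S, x⁻¹ ∈ S) {R : ℕ} {a : G}
    (ha : a ∈ ballSet S R) : a⁻¹ ∈ ballSet S R := by
  obtain ⟨l, hl, hm, hp⟩ := ha
  refine ⟨(l.map (·⁻¹)).reverse, by simpa using hl, ?_, by rw [← List.prod_inv_reverse, hp]⟩
  intro x hx
  simp only [List.mem_reverse, List.mem_map] at hx
  obtain ⟨y, hy, rfl⟩ := hx
  exact hS y (hm y hy)

theorem ballSet_finite {S : Set G} (hS : S.Finite) (R : ℕ) : (ballSet S R).Finite := by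
  induction R with
  | zero =>
    refine Set.Finite.subset (Set.finite_singleton 1) ?_
    rintro g ⟨l, hl, _, hp⟩
    rw [List.length_eq_zero_iff.mp (Nat.le_zero.mp hl)] at hp
    simp [← hp]
  | succ R ih =>
    refine Set.Finite.subset (ih.union (Set.Finite.image2 (· * ·) hS ih)) ?_
    rintro g ⟨l, hl, hm, hp⟩
    match l with
    | [] => exact Or.inl (by simpa [← hp] using one_mem_ballSet)
    | x :: l' =>
      refine Or.inr (Set.mem_image2.mpr ⟨x, hm x (by simp), l'.prod, ?_, by simp [← hp]⟩)
      exact ⟨l', by simpa using Nat.succ_le_succ_iff.mp hl, fun y hy => hm y (by simp [hy]), rfl⟩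

theorem mem_ballSet_of_wdist {π : FreeMonoid A →* G} (hπ : Function.Surjective π) {g : G} {R : ℕ}
    (h : wdist π 1 g ≤ R) : g ∈ ballSet (gens π) R := by
  obtain ⟨l, hl, hm, hp⟩ := exists_list_of_wdist hπ 1 g
  exact ⟨l, hl.le.trans h, hm, by simpa using hp⟩

theorem wdist_le_of_mem_ballSet {π : FreeMonoid A →* G} {g : G} {R : ℕ}
    (h : g ∈ ballSet (gens π) R) : wdist π 1 g ≤ R := by
  obtain ⟨l, hl, hm, hp⟩ := h
  exact (wdist_le hm (by simpa using hp)).trans hl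

theorem evalW_mem_ballSet (π : FreeMonoid A →* G) (w : List A) {R : ℕ} (hR : w.length ≤ R) :
    evalW π w ∈ ballSet (gens π) R := by
  obtain ⟨l, hl, hm, hp⟩ := exists_list_eval π w
  exact ⟨l, hl.le.trans hR, hm, hp⟩

end Auto
namespace Auto

theorem conv_take {A B : Type*} (u : List A) (v : List B) (n : ℕ) :
    (conv u v).take n = conv (u.take n) (v.take n) := by
  induction u generalizing v n with
  | nil =>
    induction v generalizing n with
    | nil => simp [conv]
    | cons b v ih =>
      cases n with
      | zero => simp [conv]
      | succ n => simp [conv, ih]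
  | cons a u ih =>
    cases v with
    | nil =>
      cases n with
      | zero => simp [conv]
      | succ n => simpa [conv] using ih [] n
    | cons b v =>
      cases n with
      | zero => simp [conv]
      | succ n => simp [conv, ih]

theorem evalW_conv {A B G G' : Type*} [Group G] [Group G'] (π : FreeMonoid A →* G)
    (π' : FreeMonoid B →* G') (u : List A) (v : List B) :
    evalW (convHom π π') (conv u v) = (evalW π u, evalW π' v) := by
  induction u generalizing v with
  | nil =>
    induction v with
    | nil => simp [conv, evalW_nil]; rfl
    | cons b v ih =>
      rw [conv, evalW_cons, ih, evalW_cons, evalW_nil]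
      simp [convHom, Prod.ext_iff]
  | cons a u ih =>
    cases v with
    | nil =>
      rw [conv, evalW_cons, ih [], evalW_cons, evalW_nil]
      simp [convHom, Prod.ext_iff]
    | cons b v =>
      rw [conv, evalW_cons, ih v, evalW_cons, evalW_cons]
      simp [convHom, Prod.ext_iff]

end Auto
namespace Auto

/-- If `t ∈ L` evaluates to `1`, every prefix of `t` evaluates into the ball of radius
`N + w₀.length`, where `w₀ ∈ L` is a fixed representative of `1`. -/
theorem prefix_wdist_le {A G' : Type*} [Group G'] {π' : FreeMonoid A →* G'}
    (hπ' : Function.Surjective π') {L : Language A} {N : ℕ}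
    (hN : ∀ u ∈ L, ∀ v ∈ L, wdist π' (evalW π' u) (evalW π' v) ≤ 1 → FellowTravel π' N u v)
    {w₀ : List A} (hw₀L : w₀ ∈ L) (hw₀ : evalW π' w₀ = 1)
    {t : List A} (ht : t ∈ L) (h1 : evalW π' t = 1) (n : ℕ) :
    wdist π' 1 (evalW π' (t.take n)) ≤ N + w₀.length := by
  have hft := hN t ht w₀ hw₀L (by rw [h1, hw₀, wdist_self]; exact Nat.zero_le 1)
  have h2 : wdist π' (evalW π' (t.take n)) (evalW π' (w₀.take n)) ≤ N := by
    exact_mod_cast hft n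
  have h3 : wdist π' 1 (evalW π' (w₀.take n)) ≤ w₀.length :=
    wdist_le_of_mem_ballSet (evalW_mem_ballSet π' _ (by simp))
  calc wdist π' 1 (evalW π' (t.take n))
      ≤ wdist π' 1 (evalW π' (w₀.take n)) + wdist π' (evalW π' (w₀.take n)) (evalW π' (t.take n)) :=
        wdist_triangle hπ' _ _ _
    _ ≤ w₀.length + N := Nat.add_le_add h3 (by rwa [wdist_symm hπ'])
    _ = N + w₀.length := Nat.add_comm _ _

section Part1

variable {A G : Type*} [Group G] (π₁ : FreeMonoid A →* G) (φ : G →* G)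

/-- Lift a list of generators of `Gφ` to generators of `G × Gφ` acting on the first
coordinate (with trivial second coordinate). -/
theorem lift_fst (l : List ↥φ.range)
    (hl : ∀ x ∈ l, x ∈ gens (φ.rangeRestrict.comp π₁)) :
    ∃ l' : List (G × ↥φ.range), l'.length = l.length ∧
      (∀ x ∈ l', x ∈ gens (convHom π₁ (φ.rangeRestrict.comp π₁))) ∧
      l'.prod.2 = 1 ∧ φ.rangeRestrict l'.prod.1 = l.prod := by
  induction l with
  | nil => exact ⟨[], rfl, by simp, by simp, by simp⟩
  | cons s l ih =>
    obtain ⟨l', hlen, hmem, h2, h1⟩ := ih fun x hx => hl x (by simp [hx])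
    have hs := hl s (by simp)
    rcases hs with ⟨a, ha⟩ | ⟨a, ha⟩
    · refine ⟨(π₁ (FreeMonoid.of a), 1) :: l', by simp [hlen], ?_, by simp [h2], ?_⟩
      · intro x hx
        rcases List.mem_cons.mp hx with rfl | hx
        · exact Or.inl ⟨Sum.inr (Sum.inl a), by simp [convHom]⟩
        · exact hmem x hx
      · simp only [List.prod_cons, Prod.fst_mul, map_mul, h1, ← ha]
        rfl
    · refine ⟨((π₁ (FreeMonoid.of a))⁻¹, 1) :: l', by simp [hlen], ?_, by simp [h2], ?_⟩
      · intro x hx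
        rcases List.mem_cons.mp hx with rfl | hx
        · refine Or.inr ⟨Sum.inr (Sum.inl a), ?_⟩
          simp [convHom, Prod.ext_iff]
        · exact hmem x hx
      · simp only [List.prod_cons, Prod.fst_mul, map_mul, h1, ← ha, map_inv]
        rfl

/-- Lift a list of generators of `Gφ` to generators of `G × Gφ` acting on the second
coordinate. -/
theorem lift_snd (l : List ↥φ.range)
    (hl : ∀ x ∈ l, x ∈ gens (φ.rangeRestrict.comp π₁)) :
    ∃ l' : List (G × ↥φ.range), l'.length = l.length ∧
      (∀ x ∈ l', x ∈ gens (convHom π₁ (φ.rangeRestrict.comp π₁))) ∧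
      l'.prod = (1, l.prod) := by
  induction l with
  | nil => exact ⟨[], rfl, by simp, by simp; rfl⟩
  | cons s l ih =>
    obtain ⟨l', hlen, hmem, hp⟩ := ih fun x hx => hl x (by simp [hx])
    have hs := hl s (by simp)
    rcases hs with ⟨a, ha⟩ | ⟨a, ha⟩
    · refine ⟨(1, s) :: l', by simp [hlen], ?_, by simp [hp]⟩
      intro x hx
      rcases List.mem_cons.mp hx with rfl | hx
      · exact Or.inl ⟨Sum.inr (Sum.inr a), by simp [convHom, ← ha]⟩
      · exact hmem x hx
    · refine ⟨(1, s) :: l', by simp [hlen], ?_, by simp [hp]⟩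
      intro x hx
      rcases List.mem_cons.mp hx with rfl | hx
      · refine Or.inr ⟨Sum.inr (Sum.inr a), ?_⟩
        simp [convHom, Prod.ext_iff, ← ha]
      · exact hmem x hx

end Part1

end Auto
namespace Auto

theorem part1 {A G : Type*} [Group G]
    (π₁ : FreeMonoid A →* G) (hπ₁ : Function.Surjective π₁)
    (L₁ : Language A) (φ : G →* G)
    (hind : IsAutomaticStructure (φ.rangeRestrict.comp π₁) L₁) :
    IsQuasiconvex (convHom π₁ (φ.rangeRestrict.comp π₁)) (convLang L₁ L₁)
        ((φ.ker).prod (⊥ : Subgroup φ.range)) := by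
  set π' := φ.rangeRestrict.comp π₁ with hπ'def
  have hπ' : Function.Surjective π' := fun y => by
    obtain ⟨x, hx⟩ := φ.rangeRestrict_surjective y
    obtain ⟨w, hw⟩ := hπ₁ x
    exact ⟨w, by simp [hπ'def, hw, hx]⟩
  obtain ⟨N, hN⟩ := hind.ft
  obtain ⟨w₀, hw₀L, hw₀⟩ := hind.onto 1
  set M := N + w₀.length with hM
  refine ⟨2 * M, ?_⟩
  rintro h hh h' hh' w hw heq n
  obtain ⟨u, hu, v, hv, rfl⟩ := hw
  rw [Subgroup.mem_prod] at hh hh'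
  have hh2 : h.2 = 1 := Subgroup.mem_bot.mp hh.2
  have hh'2 : h'.2 = 1 := Subgroup.mem_bot.mp hh'.2
  have heval := evalW_conv π₁ π' u v
  rw [heval] at heq
  have heq1 : h.1 * evalW π₁ u = h'.1 := congrArg Prod.fst heq
  have heq2 : evalW π' v = 1 := by
    have := congrArg Prod.snd heq
    simp only [Prod.snd_mul, hh2, hh'2, one_mul] at this
    exact this
  -- the image of `u` under `π'` is `1` as well
  have hcoe : ∀ t : List A, ((evalW π' t : ↥φ.range) : G) = φ (evalW π₁ t) := by
    intro t
    simp [hπ'def, evalW, MonoidHom.coe_rangeRestrict]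
  have hueval : evalW π' u = 1 := by
    have : φ (evalW π₁ u) = 1 := by
      have : evalW π₁ u = h.1⁻¹ * h'.1 := by rw [← heq1]; group
      rw [this, map_mul, map_inv, hh.1, hh'.1]
      simp
    ext
    rw [hcoe u, this]
    rfl
  -- prefixes of `u` and `v` are short in `Gφ`
  have hub : wdist π' 1 (evalW π' (u.take n)) ≤ M :=
    prefix_wdist_le hπ' hN hw₀L hw₀ hu hueval n
  have hvb : wdist π' 1 (evalW π' (v.take n)) ≤ M :=
    prefix_wdist_le hπ' hN hw₀L hw₀ hv heq2 n
  obtain ⟨l₁, hl₁len, hl₁mem, hl₁prod⟩ := exists_list_of_wdist hπ' (evalW π' (u.take n)) 1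
  obtain ⟨l₂, hl₂len, hl₂mem, hl₂prod⟩ := exists_list_of_wdist hπ' (evalW π' (v.take n)) 1
  have hl₁len' : l₁.length ≤ M := by
    rw [hl₁len, wdist_symm hπ']; simpa using hub
  have hl₂len' : l₂.length ≤ M := by
    rw [hl₂len, wdist_symm hπ']; simpa using hvb
  obtain ⟨l₁', hlen₁, hmem₁, hsnd₁, hfst₁⟩ := lift_fst π₁ φ l₁ hl₁mem
  obtain ⟨l₂', hlen₂, hmem₂, hprod₂⟩ := lift_snd π₁ φ l₂ hl₂mem
  -- the target point of `H`
  refine ⟨(h.1 * evalW π₁ (u.take n) * l₁'.prod.1, 1), ?_, ?_⟩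
  · rw [Subgroup.mem_prod]
    constructor
    · have h1 : φ.rangeRestrict (h.1 * evalW π₁ (u.take n) * l₁'.prod.1) = 1 := by
        rw [map_mul, map_mul, hfst₁, hl₁prod]
        have hh1 : φ.rangeRestrict h.1 = 1 := by
          ext; rw [MonoidHom.coe_rangeRestrict, hh.1]; rfl
        have : φ.rangeRestrict (evalW π₁ (u.take n)) = evalW π' (u.take n) := by
          simp [hπ'def, evalW]
        rw [hh1, this]
        group
      rw [MonoidHom.mem_ker]
      have := congrArg (Subtype.val) h1
      rwa [MonoidHom.coe_rangeRestrict] at this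
    · exact Subgroup.mem_bot.mpr rfl
  · rw [conv_take, evalW_conv]
    refine le_trans (wdist_le (l := l₁' ++ l₂') ?_ ?_) ?_
    · intro x hx; rcases List.mem_append.mp hx with hx | hx
      · exact hmem₁ x hx
      · exact hmem₂ x hx
    · rw [List.prod_append, hprod₂]
      have : l₁'.prod = (l₁'.prod.1, 1) := by rw [← hsnd₁]
      rw [this]
      ext
      · simp [Prod.fst_mul, hh2]
        group
      · simp [Prod.snd_mul, hh2, hl₂prod]
    · rw [List.length_append, hlen₁, hlen₂]
      calc l₁.length + l₂.length ≤ M + M := Nat.add_le_add hl₁len' hl₂len'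
        _ = 2 * M := by ring
end Auto
namespace Auto

/-- Any language accepted by a DFA with (possibly large-universe) finite state space
is regular in the sense of `IsRegular`. -/
theorem isRegular_of_finite_dfa {A : Type*} {σ' : Type*} [Finite σ'] (M : DFA A σ') :
    IsRegular M.accepts := by
  haveI : Fintype σ' := Fintype.ofFinite σ'
  obtain e := Fintype.equivFin σ'
  set M' : DFA A (Fin (Fintype.card σ')) :=
    ⟨fun s a => e (M.step (e.symm s) a), e M.start, {s | e.symm s ∈ M.accept}⟩ with hM'
  refine ⟨Fin (Fintype.card σ'), inferInstance, M', ?_⟩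
  have key : ∀ (w : List A) (s : σ'), M'.evalFrom (e s) w = e (M.evalFrom s w) := by
    intro w
    induction w with
    | nil => intro s; simp [DFA.evalFrom]
    | cons a w ih =>
      intro s
      show M'.evalFrom (M'.step (e s) a) w = e (M.evalFrom (M.step s a) w)
      have hstep : M'.step (e s) a = e (M.step s a) := by
        rw [hM']; simp
      rw [hstep, ih]
  ext w
  rw [DFA.mem_accepts, DFA.mem_accepts, DFA.eval, DFA.eval, key w M.start]
  rw [hM']
  simp

/-- Transport of an automatic structure along a bijection of alphabets. -/
theorem IsAutomaticStructure.congr_alphabet {A A' H : Type*} [Group H] (e : A' ≃ A)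
    (π : FreeMonoid A →* H) (L : Language A) (h : IsAutomaticStructure π L) :
    IsAutomaticStructure (π.comp (FreeMonoid.map e)) {w : List A' | w.map e ∈ L} := by
  set π' : FreeMonoid A' →* H := π.comp (FreeMonoid.map e) with hπ'
  have hof : ∀ a : A', π' (FreeMonoid.of a) = π (FreeMonoid.of (e a)) := fun a => by
    rw [hπ', MonoidHom.comp_apply, FreeMonoid.map_of]
  have hmapof : ∀ w : List A', FreeMonoid.map e (FreeMonoid.ofList w) =
      FreeMonoid.ofList (w.map e) := by
    intro w
    induction w with
    | nil => rfl
    | cons a w ih =>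
      rw [show FreeMonoid.ofList (a :: w) = FreeMonoid.of a * FreeMonoid.ofList w from rfl,
        map_mul, ih, FreeMonoid.map_of]
      rfl
  have heval : ∀ w : List A', evalW π' w = evalW π (w.map e) := by
    intro w
    rw [evalW, evalW, hπ', MonoidHom.comp_apply, hmapof]
  have hgens : gens π' = gens π := by
    ext x
    constructor
    · rintro (⟨a, rfl⟩ | ⟨a, rfl⟩)
      · exact Or.inl ⟨e a, (hof a).symm⟩
      · refine Or.inr ⟨e a, ?_⟩
        show (π (FreeMonoid.of (e a)))⁻¹ = (π' (FreeMonoid.of a))⁻¹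
        rw [hof a]
    · rintro (⟨a, rfl⟩ | ⟨a, rfl⟩)
      · refine Or.inl ⟨e.symm a, ?_⟩
        show π' (FreeMonoid.of (e.symm a)) = π (FreeMonoid.of a)
        rw [hof, e.apply_symm_apply]
      · refine Or.inr ⟨e.symm a, ?_⟩
        show (π' (FreeMonoid.of (e.symm a)))⁻¹ = (π (FreeMonoid.of a))⁻¹
        rw [hof, e.apply_symm_apply]
  have hwdist : ∀ g h' : H, wdist π' g h' = wdist π g h' := by
    intro g h'
    unfold wdist
    rw [hgens]
  constructor
  · obtain ⟨σ, hσ, M, hM⟩ := h.regular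
    set M' : DFA A' σ := ⟨fun s a => M.step s (e a), M.start, M.accept⟩ with hM'
    refine ⟨σ, hσ, M', ?_⟩
    have key : ∀ (w : List A') (s : σ), M'.evalFrom s w = M.evalFrom s (w.map e) := by
      intro w
      induction w with
      | nil => intro s; simp [DFA.evalFrom]
      | cons a w ih =>
        intro s
        show M'.evalFrom (M'.step s a) w = M.evalFrom (M.step s (e a)) (w.map e)
        rw [ih]
    ext w
    show w ∈ M'.accepts ↔ w.map e ∈ L
    rw [← hM]
    rw [DFA.mem_accepts, DFA.mem_accepts, DFA.eval, DFA.eval, key w M.start]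
  · intro g
    obtain ⟨w, hwL, hwe⟩ := h.onto g
    refine ⟨w.map e.symm, ?_, ?_⟩
    · show (w.map e.symm).map e ∈ L
      simpa [List.map_map, Function.comp_def] using hwL
    · rw [heval]
      have : (w.map e.symm).map e = w := by simp [List.map_map, Function.comp_def]
      rw [this]
      exact hwe
  · obtain ⟨N, hN⟩ := h.ft
    refine ⟨N, fun u hu v hv hd => ?_⟩
    have := hN (u.map e) hu (v.map e) hv (by rw [← heval, ← heval, ← hwdist]; exact hd)
    intro n
    have h2 := this n
    rwa [← List.map_take, ← List.map_take, ← heval, ← heval, ← hwdist] at h2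

end Auto
namespace Auto

/-- Words of `L` representing elements at distance `l.length` apart fellow travel with
constant `l.length * N₁ + N₁`. -/
theorem chain_lemma {A G : Type*} [Group G] {π₁ : FreeMonoid A →* G}
    (hπ₁ : Function.Surjective π₁) {L₁ : Language A}
    (honto : ∀ g : G, ∃ w ∈ L₁, evalW π₁ w = g) {N₁ : ℕ}
    (hN₁ : ∀ u ∈ L₁, ∀ v ∈ L₁,
      wdist π₁ (evalW π₁ u) (evalW π₁ v) ≤ 1 → FellowTravel π₁ N₁ u v) :
    ∀ l : List G, (∀ x ∈ l, x ∈ gens π₁) → ∀ u ∈ L₁, ∀ v ∈ L₁,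
      (evalW π₁ u)⁻¹ * evalW π₁ v = l.prod →
      ∀ n, wdist π₁ (evalW π₁ (u.take n)) (evalW π₁ (v.take n)) ≤ l.length * N₁ + N₁ := by
  intro l
  induction l with
  | nil =>
    intro _ u hu v hv hp n
    have heq : evalW π₁ u = evalW π₁ v := inv_mul_eq_one.mp (by simpa using hp)
    have hft := hN₁ u hu v hv (by rw [heq, wdist_self]; exact Nat.zero_le 1)
    have h1 : wdist π₁ (evalW π₁ (u.take n)) (evalW π₁ (v.take n)) ≤ N₁ := by
      exact_mod_cast hft n
    simpa using h1
  | cons s l ih =>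
    intro hmem u hu v hv hp n
    obtain ⟨w, hwL, hwe⟩ := honto (evalW π₁ u * s)
    have hd1 : wdist π₁ (evalW π₁ u) (evalW π₁ w) ≤ 1 := by
      refine le_trans (wdist_le (l := [s]) ?_ ?_) (by simp)
      · intro x hx; rw [List.mem_singleton.mp hx]; exact hmem s (by simp)
      · rw [hwe]; simp
    have hft := hN₁ u hu w hwL hd1
    have h1 : wdist π₁ (evalW π₁ (u.take n)) (evalW π₁ (w.take n)) ≤ N₁ := by
      exact_mod_cast hft n
    have h2 := ih (fun x hx => hmem x (by simp [hx])) w hwL v hv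
      (by rw [hwe, mul_inv_rev, mul_assoc, hp, List.prod_cons, inv_mul_cancel_left]) n
    calc wdist π₁ (evalW π₁ (u.take n)) (evalW π₁ (v.take n))
        ≤ wdist π₁ (evalW π₁ (u.take n)) (evalW π₁ (w.take n)) +
          wdist π₁ (evalW π₁ (w.take n)) (evalW π₁ (v.take n)) := wdist_triangle hπ₁ _ _ _
      _ ≤ N₁ + (l.length * N₁ + N₁) := Nat.add_le_add h1 h2
      _ ≤ (s :: l).length * N₁ + N₁ := by simp [Nat.succ_mul]; omega

end Auto
namespace Auto

theorem part2 {A G : Type*} [Fintype A] [Group G]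
    (π₁ : FreeMonoid A →* G) (hπ₁ : Function.Surjective π₁)
    (L₁ : Language A) (h₁ : IsAutomaticStructure π₁ L₁)
    (φ : G →* G)
    (hind : IsAutomaticStructure (φ.rangeRestrict.comp π₁) L₁) :
    IsAutomaticGroup φ.ker := by
  classical
  set π' := φ.rangeRestrict.comp π₁ with hπ'def
  have hπ' : Function.Surjective π' := fun y => by
    obtain ⟨x, hx⟩ := φ.rangeRestrict_surjective y
    obtain ⟨w, hw⟩ := hπ₁ x
    exact ⟨w, by simp [hπ'def, hw, hx]⟩
  have hcoe : ∀ w : List A, ((evalW π' w : ↥φ.range) : G) = φ (evalW π₁ w) := fun w => by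
    simp [hπ'def, evalW, MonoidHom.coe_rangeRestrict]
  have hofcoe : ∀ a : A, ((π' (FreeMonoid.of a) : ↥φ.range) : G) = φ (π₁ (FreeMonoid.of a)) :=
    fun a => by simp [hπ'def, MonoidHom.coe_rangeRestrict]
  obtain ⟨N, hN⟩ := hind.ft
  obtain ⟨w₀, hw₀L, hw₀⟩ := hind.onto 1
  set M := N + w₀.length with hM
  set B : Set ↥φ.range := ballSet (gens π') M with hB
  have hBfin : B.Finite := ballSet_finite (gens_finite π') M
  have h1B : (1 : ↥φ.range) ∈ B := one_mem_ballSet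
  -- a section of `φ` over its range
  obtain ⟨σg, hσg1, hσg⟩ : ∃ σg : ↥φ.range → G, σg 1 = 1 ∧ ∀ y, φ (σg y) = ↑y := by
    choose σ₀ hσ₀ using fun y : ↥φ.range => MonoidHom.mem_range.mp y.2
    refine ⟨fun y => if y = 1 then 1 else σ₀ y, by simp, fun y => ?_⟩
    show φ (if y = 1 then 1 else σ₀ y) = ↑y
    split_ifs with h
    · simp [h]
    · exact hσ₀ y
  set S : ℕ := hBfin.toFinset.sup fun y => wdist π₁ 1 (σg y) with hS
  have hσball : ∀ y ∈ B, σg y ∈ ballSet (gens π₁) S := fun y hy =>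
    mem_ballSet_of_wdist hπ₁
      (Finset.le_sup (f := fun y => wdist π₁ 1 (σg y)) (hBfin.mem_toFinset.mpr hy))
  set R₀ : ℕ := S + 1 + S with hR₀
  -- the alphabet
  set Fs : Set G := {g : G | φ g = 1 ∧ g ∈ ballSet (gens π₁) R₀} with hFs
  have hFsfin : Fs.Finite := (ballSet_finite (gens_finite π₁) R₀).subset fun g hg => hg.2
  set πF : FreeMonoid ↥Fs →* ↥φ.ker :=
    FreeMonoid.lift (fun f : ↥Fs => (⟨f.1, MonoidHom.mem_ker.mpr f.2.1⟩ : ↥φ.ker)) with hπF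
  have hπFof : ∀ f : ↥Fs, ((πF (FreeMonoid.of f) : ↥φ.ker) : G) = (f : G) := fun f => by
    rw [hπF, FreeMonoid.lift_eval_of]
  -- the automaton
  obtain ⟨σ₁, hσ₁, M₁, hM₁⟩ := h₁.regular
  set nfa : NFA ↥Fs (σ₁ × ↥B) :=
    { step := fun q f => {q' | ∃ a : A, q'.1 = M₁.step q.1 a ∧
        ((q'.2 : ↥φ.range) = (q.2 : ↥φ.range) * π' (FreeMonoid.of a)) ∧
        ((f : G) = σg q.2 * π₁ (FreeMonoid.of a) *
          (σg ((q.2 : ↥φ.range) * π' (FreeMonoid.of a)))⁻¹)}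
      start := {q | q.1 = M₁.start ∧ (q.2 : ↥φ.range) = 1}
      accept := {q | q.1 ∈ M₁.accept ∧ (q.2 : ↥φ.range) = 1} } with hnfa
  set LF : Language ↥Fs := nfa.accepts with hLF
  haveI : Fintype ↥B := hBfin.fintype
  have hreg : IsRegular LF := by
    rw [hLF, ← NFA.toDFA_correct]
    exact isRegular_of_finite_dfa nfa.toDFA
  -- decoding accepted words
  have decode : ∀ α : List ↥Fs, ∀ q ∈ nfa.evalFrom nfa.start α,
      ∃ u : List A, u.length = α.length ∧ q.1 = M₁.evalFrom M₁.start u ∧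
        ((q.2 : ↥φ.range) = evalW π' u) ∧
        ∀ n, ((evalW πF (α.take n) : ↥φ.ker) : G)
            = evalW π₁ (u.take n) * (σg (evalW π' (u.take n)))⁻¹ ∧
          evalW π' (u.take n) ∈ B := by
    intro α
    induction α using List.reverseRecOn with
    | nil =>
      intro q hq
      rw [NFA.evalFrom_nil] at hq
      refine ⟨[], rfl, hq.1, by rw [hq.2, evalW_nil], fun n => ?_⟩
      refine ⟨?_, by rw [List.take_nil, evalW_nil]; exact h1B⟩
      rw [List.take_nil, List.take_nil, evalW_nil, evalW_nil, evalW_nil, hσg1]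
      simp
    | append_singleton α f ihα =>
      intro q hq
      rw [NFA.evalFrom_append, NFA.evalFrom_singleton, NFA.mem_stepSet] at hq
      obtain ⟨t, ht, a, hq1, hq2, hf⟩ := hq
      obtain ⟨u, hlen, ht1, ht2, hpre⟩ := ihα t ht
      have hfull : ((evalW πF α : ↥φ.ker) : G) = evalW π₁ u * (σg (evalW π' u))⁻¹ := by
        have := (hpre u.length).1
        rwa [List.take_of_length_le (by omega), List.take_length] at this
      refine ⟨u ++ [a], by simp [hlen], ?_, ?_, ?_⟩
      · rw [hq1, ht1, DFA.evalFrom_append_singleton]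
      · rw [hq2, ht2, evalW_append, evalW_singleton]
      · intro n
        by_cases hn : n ≤ α.length
        · rw [List.take_append_of_le_length (show n ≤ u.length by omega),
            List.take_append_of_le_length (show n ≤ α.length by omega)]
          exact hpre n
        · rw [List.take_of_length_le (show (α ++ [f]).length ≤ n by simp; omega),
            List.take_of_length_le (show (u ++ [a]).length ≤ n by simp; omega)]
          constructor
          · rw [evalW_append, evalW_singleton, evalW_append, evalW_singleton, Subgroup.coe_mul,
              hπFof, hfull, hf, ht2, evalW_append, evalW_singleton]
            group
          · rw [evalW_append, evalW_singleton, ← ht2, ← hq2]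
            exact q.2.2
  -- encoding words of `L₁` whose `π'`-prefixes stay in `B`
  have encode : ∀ u : List A, (∀ n, evalW π' (u.take n) ∈ B) →
      ∃ α : List ↥Fs, ∃ q ∈ nfa.evalFrom nfa.start α, α.length = u.length ∧
        q.1 = M₁.evalFrom M₁.start u ∧ ((q.2 : ↥φ.range) = evalW π' u) ∧
        ((evalW πF α : ↥φ.ker) : G) = evalW π₁ u * (σg (evalW π' u))⁻¹ := by
    intro u
    induction u using List.reverseRecOn with
    | nil =>
      intro _
      refine ⟨[], (M₁.start, ⟨1, h1B⟩), ?_, rfl, rfl, by rw [evalW_nil], ?_⟩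
      · rw [NFA.evalFrom_nil]; exact ⟨rfl, rfl⟩
      · rw [evalW_nil, evalW_nil, evalW_nil, hσg1]; simp
    | append_singleton u a ihu =>
      intro hpre
      have hpre' : ∀ n, evalW π' (u.take n) ∈ B := by
        intro n
        by_cases hn : n ≤ u.length
        · have := hpre n; rwa [List.take_append_of_le_length hn] at this
        · rw [List.take_of_length_le (by omega)]
          have := hpre u.length
          rwa [List.take_append_of_le_length le_rfl, List.take_length] at this
      obtain ⟨α, q, hq, hlen, h1, h2, h3⟩ := ihu hpre'
      have huB : evalW π' u ∈ B := by
        have := hpre' u.length; rwa [List.take_length] at this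
      have hmemB : evalW π' u * π' (FreeMonoid.of a) ∈ B := by
        have := hpre (u.length + 1)
        rwa [List.take_of_length_le (by simp), evalW_append, evalW_singleton] at this
      have hker : φ (σg (evalW π' u) * π₁ (FreeMonoid.of a) *
          (σg (evalW π' u * π' (FreeMonoid.of a)))⁻¹) = 1 := by
        rw [map_mul, map_mul, map_inv, hσg, hσg, ← hofcoe, Subgroup.coe_mul]
        group
      have hball : σg (evalW π' u) * π₁ (FreeMonoid.of a) *
          (σg (evalW π' u * π' (FreeMonoid.of a)))⁻¹ ∈ ballSet (gens π₁) R₀ := by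
        rw [hR₀]
        refine mul_mem_ballSet (mul_mem_ballSet (hσball _ huB) ?_)
          (inv_mem_ballSet (fun x hx => inv_mem_gens hx) (hσball _ hmemB))
        refine ⟨[π₁ (FreeMonoid.of a)], by simp, ?_, by simp⟩
        intro x hx
        rw [List.mem_singleton.mp hx]
        exact mem_gens_of π₁ a
      refine ⟨α ++ [(⟨_, hker, hball⟩ : ↥Fs)],
        (M₁.step q.1 a, ⟨(q.2 : ↥φ.range) * π' (FreeMonoid.of a), by rw [h2]; exact hmemB⟩),
        ?_, by simp [hlen], ?_, ?_, ?_⟩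
      · rw [NFA.evalFrom_append, NFA.evalFrom_singleton, NFA.mem_stepSet]
        refine ⟨q, hq, a, rfl, rfl, ?_⟩
        show σg (evalW π' u) * π₁ (FreeMonoid.of a) *
            (σg (evalW π' u * π' (FreeMonoid.of a)))⁻¹ = _
        rw [h2]
      · rw [h1, DFA.evalFrom_append_singleton]
      · show (q.2 : ↥φ.range) * π' (FreeMonoid.of a) = _
        rw [h2, evalW_append, evalW_singleton]
      · rw [evalW_append, evalW_singleton, Subgroup.coe_mul, hπFof, h3,
          evalW_append, evalW_singleton, evalW_append, evalW_singleton]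
        show _ = evalW π₁ u * π₁ (FreeMonoid.of a) *
          (σg (evalW π' u * π' (FreeMonoid.of a)))⁻¹
        group
  -- onto
  have honto : ∀ g : ↥φ.ker, ∃ w ∈ LF, evalW πF w = g := by
    intro g
    obtain ⟨u, huL, hue⟩ := h₁.onto ↑g
    have hu1 : evalW π' u = 1 := by
      ext
      rw [hcoe, hue, MonoidHom.mem_ker.mp g.2]
      simp
    have hpreB : ∀ n, evalW π' (u.take n) ∈ B := fun n =>
      mem_ballSet_of_wdist hπ' (prefix_wdist_le hπ' hN hw₀L hw₀ huL hu1 n)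
    obtain ⟨α, q, hq, hlen, h1, h2, h3⟩ := encode u hpreB
    refine ⟨α, ?_, ?_⟩
    · rw [hLF, NFA.mem_accepts]
      refine ⟨q, ⟨?_, by rw [h2, hu1]⟩, hq⟩
      rw [h1]
      exact (DFA.mem_accepts M₁).mp (hM₁ ▸ huL : u ∈ M₁.accepts)
    · ext
      rw [h3, hu1, hσg1, hue]
      simp
  have hπFsurj : Function.Surjective πF := fun g => by
    obtain ⟨w, _, he⟩ := honto g
    exact ⟨FreeMonoid.ofList w, he⟩
  -- fellow traveller property
  obtain ⟨N₁, hN₁⟩ := h₁.ft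
  set P : ℕ := R₀ * N₁ + N₁ with hP
  set K : Set ↥φ.ker := {d : ↥φ.ker | (d : G) ∈ ballSet (gens π₁) (S + P + S)} with hK
  have hKfin : K.Finite := by
    have : K = (Subtype.val) ⁻¹' (ballSet (gens π₁) (S + P + S)) := rfl
    rw [this]
    exact Set.Finite.preimage (Subtype.coe_injective.injOn) (ballSet_finite (gens_finite π₁) _)
  set c : ℕ := hKfin.toFinset.sup fun d => wdist πF 1 d with hc
  have hft : ∀ α ∈ LF, ∀ β ∈ LF,
      wdist πF (evalW πF α) (evalW πF β) ≤ 1 → FellowTravel πF c α β := by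
    intro α hαL β hβL hd
    obtain ⟨qα, hqacc, hqα⟩ := NFA.mem_accepts.mp hαL
    obtain ⟨qβ, hqacc', hqβ⟩ := NFA.mem_accepts.mp hβL
    obtain ⟨u, hulen, hu1, hu2, hupre⟩ := decode α qα hqα
    obtain ⟨v, hvlen, hv1, hv2, hvpre⟩ := decode β qβ hqβ
    have huL : u ∈ L₁ := by
      rw [← hM₁, DFA.mem_accepts]
      show M₁.evalFrom M₁.start u ∈ M₁.accept
      rw [← hu1]; exact hqacc.1
    have hvL : v ∈ L₁ := by
      rw [← hM₁, DFA.mem_accepts]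
      show M₁.evalFrom M₁.start v ∈ M₁.accept
      rw [← hv1]; exact hqacc'.1
    have huπ' : evalW π' u = 1 := hu2.symm.trans hqacc.2
    have hvπ' : evalW π' v = 1 := hv2.symm.trans hqacc'.2
    have hcα : ((evalW πF α : ↥φ.ker) : G) = evalW π₁ u := by
      have := (hupre u.length).1
      rw [List.take_of_length_le (by omega), List.take_length, huπ', hσg1] at this
      simpa using this
    have hcβ : ((evalW πF β : ↥φ.ker) : G) = evalW π₁ v := by
      have := (hvpre v.length).1
      rw [List.take_of_length_le (by omega), List.take_length, hvπ', hσg1] at this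
      simpa using this
    -- the evaluations of `u` and `v` are close in `G`
    have hgensF : ∀ x ∈ gens πF, ((x : ↥φ.ker) : G) ∈ ballSet (gens π₁) R₀ := by
      rintro x (⟨f, rfl⟩ | ⟨f, rfl⟩)
      · rw [hπFof]; exact f.2.2
      · rw [show (((πF (FreeMonoid.of f))⁻¹ : ↥φ.ker) : G) = ((πF (FreeMonoid.of f) : ↥φ.ker) : G)⁻¹
          from rfl, hπFof]
        exact inv_mem_ballSet (fun x hx => inv_mem_gens hx) f.2.2
    obtain ⟨l, hlen, hm, hp⟩ := exists_list_of_wdist hπFsurj (evalW πF α) (evalW πF β)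
    have hl1 : l.length ≤ 1 := by omega
    have hdball : (evalW π₁ u)⁻¹ * evalW π₁ v ∈ ballSet (gens π₁) R₀ := by
      have hco : (evalW π₁ u)⁻¹ * evalW π₁ v = ((l.prod : ↥φ.ker) : G) := by
        rw [hp, Subgroup.coe_mul]
        congr 1
        · rw [show (((evalW πF α)⁻¹ : ↥φ.ker) : G) = ((evalW πF α : ↥φ.ker) : G)⁻¹ from rfl, hcα]
        · exact hcβ.symm
      rw [hco]
      match l, hl1 with
      | [], _ => simpa using one_mem_ballSet
      | [x], _ =>
        rw [List.prod_singleton]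
        exact hgensF x (hm x (by simp))
    obtain ⟨l₀, hl₀len, hl₀m, hl₀p⟩ := hdball
    have hchain := chain_lemma hπ₁ h₁.onto hN₁ l₀ hl₀m u huL v hvL hl₀p.symm
    intro n
    have hbound : wdist π₁ (evalW π₁ (u.take n)) (evalW π₁ (v.take n)) ≤ P := by
      refine (hchain n).trans ?_
      rw [hP]
      exact Nat.add_le_add (Nat.mul_le_mul_right _ hl₀len) le_rfl
    set δ : ↥φ.ker := (evalW πF (α.take n))⁻¹ * evalW πF (β.take n) with hδ
    have hδK : δ ∈ K := by
      show ((δ : ↥φ.ker) : G) ∈ ballSet (gens π₁) (S + P + S)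
      have hδco : ((δ : ↥φ.ker) : G) = σg (evalW π' (u.take n)) *
          ((evalW π₁ (u.take n))⁻¹ * evalW π₁ (v.take n)) *
          (σg (evalW π' (v.take n)))⁻¹ := by
        rw [hδ, Subgroup.coe_mul,
          show (((evalW πF (α.take n))⁻¹ : ↥φ.ker) : G)
            = ((evalW πF (α.take n) : ↥φ.ker) : G)⁻¹ from rfl,
          (hupre n).1, (hvpre n).1]
        group
      rw [hδco]
      refine mul_mem_ballSet (mul_mem_ballSet (hσball _ (hupre n).2) ?_)
        (inv_mem_ballSet (fun x hx => inv_mem_gens hx) (hσball _ (hvpre n).2))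
      exact mem_ballSet_of_wdist hπ₁ (by rwa [← wdist_eq_one_left])
    have : wdist πF (evalW πF (α.take n)) (evalW πF (β.take n)) ≤ c := by
      rw [wdist_eq_one_left]
      exact Finset.le_sup (f := fun d => wdist πF 1 d) (hKfin.mem_toFinset.mpr hδK)
    exact_mod_cast this
  -- assemble and transport to a small alphabet
  have hstruct : IsAutomaticStructure πF LF := ⟨hreg, honto, ⟨c, hft⟩⟩
  haveI : Fintype ↥Fs := hFsfin.fintype
  refine ⟨Fin (Fintype.card ↥Fs), inferInstance,
    πF.comp (FreeMonoid.map (Fintype.equivFin ↥Fs).symm), _,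
    hstruct.congr_alphabet (Fintype.equivFin ↥Fs).symm πF LF⟩

end Auto

open Auto

/-- If `L₁` induces an automatic structure through `φ` and the BRP holds for
`(φ, L₁, L₂)`, then `{(x, 1) : x ∈ Ker φ} ≤ G × Gφ` is `(L₁ ⋄ L₁^(φ))`-quasiconvex; in
particular `Ker φ` is an automatic group. -/
theorem ker_quasiconvex {A B G : Type*} [Fintype A] [Fintype B] [Group G]
    (π₁ : FreeMonoid A →* G) (hπ₁ : Function.Surjective π₁)
    (π₂ : FreeMonoid B →* G) (hπ₂ : Function.Surjective π₂)
    (L₁ : Language A) (L₂ : Language B)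
    (h₁ : IsAutomaticStructure π₁ L₁) (h₂ : IsAutomaticStructure π₂ L₂)
    (φ : G →* G)
    (hind : IsAutomaticStructure (φ.rangeRestrict.comp π₁) L₁)
    (hbrp : BRP π₁ π₂ φ L₁ L₂) :
    IsQuasiconvex (convHom π₁ (φ.rangeRestrict.comp π₁)) (convLang L₁ L₁)
        ((φ.ker).prod (⊥ : Subgroup φ.range)) ∧
      IsAutomaticGroup φ.ker := by
  exact ⟨part1 π₁ hπ₁ L₁ φ hind, part2 π₁ hπ₁ L₁ h₁ φ hind⟩
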